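/- For Re z > 0 and Re ν > 0, the terminant function has the Laplace integral representation T_ν(z) = (e^{−z}/(2π)) ∫_0^∞ e^{−zt} t^{ν−1}/(1+t) dt. -/

import Mathlib

open Complex Real

section TerminantAux

open MeasureTheory Set Filter

private lemma contOn_cpow (ν : ℂ) : ContinuousOn (fun s : ℝ => (s:ℂ)^(ν-1)) (Ioi 0) :=
  fun s hs => (Complex.continuousAt_ofReal_cpow_const s _ (Or.inr (ne_of_gt hs))).continuousWithinAt

private lemma norm_aux (ν w : ℂ) {s : ℝ} (hs : 0 < s) :
    ‖(s:ℂ)^(ν-1) * Complex.exp (-(w * s))‖ = s ^ (ν.re-1) * Real.exp (-(w.re * s)) := by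
  rw [norm_mul, Complex.norm_exp,
    Complex.norm_cpow_eq_rpow_re_of_pos hs]
  simp [Complex.neg_re, Complex.mul_re, Complex.sub_re]

private lemma int_bound {a c : ℝ} (ha : -1 < a) (hc : 0 < c) :
    IntegrableOn (fun s : ℝ => s ^ a * Real.exp (-(c*s))) (Ioi 0) := by
  have := integrableOn_rpow_mul_exp_neg_mul_rpow ha zero_lt_one hc
  simpa [Real.rpow_one] using this

private lemma int_f {ν : ℂ} (hν : 0 < ν.re) {w : ℂ} (hw : 0 < w.re) :
    IntegrableOn (fun s : ℝ => (s:ℂ)^(ν-1) * Complex.exp (-(w * s))) (Ioi 0) := by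
  refine Integrable.mono' (int_bound (by linarith : (-1:ℝ) < ν.re - 1) hw) ?_ ?_
  · exact ((contOn_cpow ν).mul
      (Continuous.continuousOn (by continuity))).aestronglyMeasurable measurableSet_Ioi
  · filter_upwards [ae_restrict_mem measurableSet_Ioi] with s hs
    rw [norm_aux ν w hs]

private lemma deriv_int {ν : ℂ} (hν : 0 < ν.re) {w : ℂ} (hw : 0 < w.re) :
    DifferentiableAt ℂ (fun u : ℂ => ∫ s in Ioi (0:ℝ), (s:ℂ)^(ν-1) * Complex.exp (-(u * s))) w := by
  set F : ℂ → ℝ → ℂ := fun u s => (s:ℂ)^(ν-1) * Complex.exp (-(u * s)) with hF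
  set F' : ℂ → ℝ → ℂ := fun u s => (s:ℂ)^(ν-1) * (Complex.exp (-(u * s)) * (-(s:ℂ))) with hF'
  have hmeas : ∀ u : ℂ, AEStronglyMeasurable (F u) (volume.restrict (Ioi 0)) := fun u =>
    ((contOn_cpow ν).mul (Continuous.continuousOn (by continuity))).aestronglyMeasurable
      measurableSet_Ioi
  have key := hasDerivAt_integral_of_dominated_loc_of_deriv_le
    (F := F) (F' := F') (x₀ := w) (μ := volume.restrict (Ioi 0))
    (bound := fun s : ℝ => s ^ ν.re * Real.exp (-(w.re/2 * s)))
    (Metric.ball_mem_nhds w (half_pos hw)) (Eventually.of_forall hmeas) (int_f hν hw)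
    (((contOn_cpow ν).mul (Continuous.continuousOn (by continuity))).aestronglyMeasurable
      measurableSet_Ioi)
    ?_ ?_ ?_
  · exact key.2.differentiableAt
  · -- bound
    filter_upwards [ae_restrict_mem measurableSet_Ioi] with s hs u hu
    have hre : w.re / 2 ≤ u.re := by
      have := Complex.abs_re_le_norm (u - w)
      rw [Complex.sub_re] at this
      have hd : ‖u - w‖ < w.re / 2 := by
        rwa [← Complex.dist_eq, ← Metric.mem_ball]
      have := abs_le.mp (le_of_lt (lt_of_le_of_lt this hd))
      linarith [this.1]
    have hs' : (0:ℝ) < s := hs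
    calc ‖F' u s‖ = s ^ (ν.re - 1) * Real.exp (-(u.re * s)) * s := by
          simp only [hF', ← mul_assoc]
          rw [norm_mul, norm_aux ν u hs']
          simp [abs_of_pos hs']
      _ ≤ s ^ ν.re * Real.exp (-(w.re/2 * s)) := by
          rw [show s ^ (ν.re - 1) * Real.exp (-(u.re * s)) * s
              = s ^ (ν.re - 1) * s * Real.exp (-(u.re * s)) by ring,
            ← Real.rpow_add_one (ne_of_gt hs') , sub_add_cancel]
          have hexp : Real.exp (-(u.re * s)) ≤ Real.exp (-(w.re/2 * s)) :=
            Real.exp_le_exp.mpr (by nlinarith)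
          exact mul_le_mul_of_nonneg_left hexp (Real.rpow_nonneg hs'.le _)
  · exact int_bound (by linarith) (half_pos hw)
  · -- differentiability
    filter_upwards [ae_restrict_mem measurableSet_Ioi] with s _ u _
    have h1 : HasDerivAt (fun u : ℂ => -(u * s)) (-(s:ℂ)) u := by
      exact (hasDerivAt_mul_const (x := u) (s:ℂ)).neg
    exact (h1.cexp).const_mul _

private lemma gamma_cplx {ν : ℂ} (hν : 0 < ν.re) {w : ℂ} (hw : 0 < w.re) :
    ∫ s in Ioi (0:ℝ), (s:ℂ)^(ν-1) * Complex.exp (-(w * s)) = Complex.Gamma ν * w ^ (-ν) := by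
  set U : Set ℂ := {c : ℂ | 0 < c.re} with hU
  have hUopen : IsOpen U := isOpen_lt continuous_const Complex.continuous_re
  set g : ℂ → ℂ := fun u => ∫ s in Ioi (0:ℝ), (s:ℂ)^(ν-1) * Complex.exp (-(u * s)) with hg
  set h : ℂ → ℂ := fun u => Complex.Gamma ν * u ^ (-ν) with hh
  have hganal : AnalyticOnNhd ℂ g U :=
    DifferentiableOn.analyticOnNhd
      (fun u hu => (deriv_int hν hu).differentiableWithinAt) hUopen
  have hhanal : AnalyticOnNhd ℂ h U :=
    DifferentiableOn.analyticOnNhd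
      (fun u hu => ((differentiableAt_id.cpow (differentiableAt_const _)
        (Or.inl hu)).const_mul _).differentiableWithinAt) hUopen
  have hreal : ∀ r : ℝ, 0 < r → g r = h r := by
    intro r hr
    have := Complex.integral_cpow_mul_exp_neg_mul_Ioi hν hr
    simp only [hg, hh]
    rw [this, Complex.cpow_neg, one_div, Complex.inv_cpow, mul_comm]
    rw [Complex.arg_ofReal_of_nonneg hr.le]
    exact (Real.pi_ne_zero).symm
  have h1 : (1:ℂ) ∈ U := by simp [hU]
  have hfreq : ∃ᶠ c in nhdsWithin (1:ℂ) {(1:ℂ)}ᶜ, g c = h c := by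
    have htend : Tendsto (fun n : ℕ => ((1 + ((n:ℝ)+1)⁻¹ : ℝ) : ℂ)) atTop
        (nhdsWithin (1:ℂ) {(1:ℂ)}ᶜ) := by
      apply tendsto_nhdsWithin_of_tendsto_nhds_of_eventually_within
      · have : Tendsto (fun n : ℕ => (1 + ((n:ℝ)+1)⁻¹ : ℝ)) atTop (nhds 1) := by
          simpa using tendsto_const_nhds.add (tendsto_one_div_add_atTop_nhds_zero_nat (𝕜 := ℝ))
        have := (Complex.continuous_ofReal.tendsto (1:ℝ)).comp this
        simpa [Function.comp_def] using this
      · filter_upwards with n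
        simp only [Set.mem_compl_iff, Set.mem_singleton_iff]
        intro hcontra
        have : (1 + ((n:ℝ)+1)⁻¹ : ℝ) = 1 := by exact_mod_cast hcontra
        have hpos : (0:ℝ) < ((n:ℝ)+1)⁻¹ := by positivity
        linarith
    exact htend.frequently (Frequently.of_forall fun n =>
      hreal _ (by positivity))
  have := hganal.eqOn_of_preconnected_of_frequently_eq hhanal
    ((convex_halfSpace_re_gt 0).isPreconnected) h1 hfreq
  exact this hw

private lemma cexp_int {c : ℝ} (hc : 0 < c) :
    ∫ t in Ioi (0:ℝ), Complex.exp (-((c:ℂ) * t)) = ((c:ℂ))⁻¹ := by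
  have : ∀ t : ℝ, Complex.exp (-((c:ℂ) * t)) = ((Real.exp (-(c * t)) : ℝ) : ℂ) := by
    intro t
    rw [← Complex.ofReal_mul, ← Complex.ofReal_neg, Complex.ofReal_exp]
  simp_rw [this]
  have cc : ∀ r : ℝ, Complex.ofReal r = @RCLike.ofReal ℂ _ r := fun r => rfl
  conv_lhs => enter [2, t]; rw [cc]
  rw [_root_.integral_ofReal, ← cc]
  have h2 := integral_comp_mul_left_Ioi (fun x : ℝ => Real.exp (-x)) 0 hc
  simp only [mul_zero, integral_exp_neg_Ioi, neg_zero, Real.exp_zero, smul_eq_mul,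
    mul_one] at h2
  rw [h2]
  norm_num

set_option maxHeartbeats 1000000 in
private lemma fubini_int {ν z : ℂ} (hz : 0 < z.re) (hν : 0 < ν.re) :
    Integrable (Function.uncurry fun t s : ℝ =>
        (s:ℂ)^(ν-1) * Complex.exp (-((z + t) * s)) * Complex.exp (-(z + t)))
      ((volume.restrict (Ioi 0)).prod (volume.restrict (Ioi 0))) := by
  have hwre : ∀ t : ℝ, 0 < t → 0 < (z + (t:ℂ)).re := by
    intro t ht; simp [Complex.add_re]; linarith
  have hmeas : AEStronglyMeasurable (Function.uncurry fun t s : ℝ =>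
      (s:ℂ)^(ν-1) * Complex.exp (-((z + t) * s)) * Complex.exp (-(z + t)))
      ((volume.restrict (Ioi 0)).prod (volume.restrict (Ioi 0))) := by
    rw [Measure.prod_restrict]
    have hrfl : (Function.uncurry fun t s : ℝ =>
        (s:ℂ)^(ν-1) * Complex.exp (-((z + t) * s)) * Complex.exp (-(z + t)))
        = fun p : ℝ × ℝ =>
          (p.2:ℂ)^(ν-1) * Complex.exp (-((z + p.1) * p.2)) * Complex.exp (-(z + p.1)) := rfl
    rw [hrfl]
    have c1 : ContinuousOn (fun p : ℝ × ℝ => (p.2:ℂ)^(ν-1)) (Ioi 0 ×ˢ Ioi 0) :=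
      (contOn_cpow ν).comp continuous_snd.continuousOn (fun p hp => hp.2)
    have c2 : Continuous (fun p : ℝ × ℝ => Complex.exp (-((z + p.1) * p.2))) := by fun_prop
    have c3 : Continuous (fun p : ℝ × ℝ => Complex.exp (-(z + p.1))) := by fun_prop
    exact ((c1.mul c2.continuousOn).mul c3.continuousOn).aestronglyMeasurable
      (measurableSet_Ioi.prod measurableSet_Ioi)
  rw [integrable_prod_iff hmeas]
  simp only [Function.uncurry_apply_pair]
  constructor
  · filter_upwards [ae_restrict_mem measurableSet_Ioi] with t ht
    exact (int_f hν (hwre t ht)).mul_const _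
  · set C : ℝ := ∫ s in Ioi (0:ℝ), s ^ (ν.re - 1) * Real.exp (-(z.re * s)) with hC
    have hCnn : 0 ≤ C := setIntegral_nonneg measurableSet_Ioi fun s hs =>
      mul_nonneg (Real.rpow_nonneg (le_of_lt hs) _) (Real.exp_nonneg _)
    apply Integrable.mono' (g := fun t : ℝ => (C * Real.exp (-z.re)) * Real.exp (-t))
    · have : IntegrableOn (fun t : ℝ => Real.exp (-t)) (Ioi 0) := by
        simpa using exp_neg_integrableOn_Ioi 0 one_pos
      exact this.const_mul _
    · exact hmeas.norm.integral_prod_right'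
    · filter_upwards [ae_restrict_mem measurableSet_Ioi] with t ht
      have ht' : (0:ℝ) < t := ht
      rw [Real.norm_of_nonneg (integral_nonneg fun s => norm_nonneg _)]
      have hble : ∀ s ∈ Ioi (0:ℝ),
          ‖(s:ℂ)^(ν-1) * Complex.exp (-((z + t) * s)) * Complex.exp (-(z + t))‖
            ≤ (s ^ (ν.re - 1) * Real.exp (-(z.re * s))) * (Real.exp (-z.re) * Real.exp (-t)) := by
        intro s hs
        have hs' : (0:ℝ) < s := hs
        rw [norm_mul, norm_aux ν (z + t) hs']
        have h1 : ‖Complex.exp (-(z + (t:ℂ)))‖ = Real.exp (-z.re) * Real.exp (-t) := by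
          rw [Complex.norm_exp, ← Real.exp_add]
          congr 1
          simp [Complex.add_re]
          ring
        rw [h1]
        have hexp : Real.exp (-((z + (t:ℂ)).re * s)) ≤ Real.exp (-(z.re * s)) := by
          apply Real.exp_le_exp.mpr
          simp only [Complex.add_re, Complex.ofReal_re, neg_le_neg_iff]
          nlinarith
        exact mul_le_mul_of_nonneg_right
          (mul_le_mul_of_nonneg_left hexp (Real.rpow_nonneg hs'.le _)) (by positivity)
      calc (∫ s in Ioi (0:ℝ), ‖(s:ℂ)^(ν-1) * Complex.exp (-((z + t) * s))
              * Complex.exp (-(z + t))‖)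
          ≤ ∫ s in Ioi (0:ℝ),
              (s ^ (ν.re - 1) * Real.exp (-(z.re * s))) * (Real.exp (-z.re) * Real.exp (-t)) := by
            apply setIntegral_mono_on
            · exact ((int_f hν (hwre t ht')).mul_const _).norm
            · exact (int_bound (by linarith) hz).mul_const _
            · exact measurableSet_Ioi
            · exact hble
        _ = (C * Real.exp (-z.re)) * Real.exp (-t) := by
            rw [integral_mul_const, hC]; ring


end TerminantAux

/-- The upper incomplete gamma function `Γ(a, z) = ∫_z^∞ t^{a−1} e^{−t} dt`
(integral along the horizontal ray from `z`, valid for `Re z > 0`). -/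
noncomputable def upperGamma (a z : ℂ) : ℂ :=
  ∫ t in Set.Ioi (0 : ℝ), (z + t) ^ (a - 1) * Complex.exp (-(z + t))

/-- The terminant function `T_ν(z) = (Γ(ν)/(2π)) Γ(1−ν, z)`. -/
noncomputable def terminant (ν z : ℂ) : ℂ :=
  Complex.Gamma ν / (2 * Real.pi) * upperGamma (1 - ν) z

open MeasureTheory Set Filter in
/-- For `Re z > 0` and `Re ν > 0`, the terminant has the Laplace integral
representation `T_ν(z) = (e^{−z}/(2π)) ∫_0^∞ e^{−zt} t^{ν−1}/(1+t) dt`. -/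
theorem terminant_laplace (ν z : ℂ) (hz : 0 < z.re) (hν : 0 < ν.re) :
    terminant ν z = Complex.exp (-z) / (2 * Real.pi) *
      ∫ t in Set.Ioi (0 : ℝ),
        Complex.exp (-z * t) * (t : ℂ) ^ (ν - 1) / (1 + (t : ℂ)) := by
  have hwre : ∀ t : ℝ, 0 < t → 0 < (z + (t:ℂ)).re := by
    intro t ht; simp [Complex.add_re]; linarith
  have key : Complex.Gamma ν * upperGamma (1 - ν) z
      = Complex.exp (-z) * ∫ t in Ioi (0:ℝ),
          Complex.exp (-z * t) * (t : ℂ) ^ (ν - 1) / (1 + (t : ℂ)) := by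
    rw [upperGamma, ← integral_const_mul]
    have step1 : ∀ t ∈ Ioi (0:ℝ),
        Complex.Gamma ν * ((z + t) ^ (1 - ν - 1) * Complex.exp (-(z + t)))
          = ∫ s in Ioi (0:ℝ),
              (s:ℂ)^(ν-1) * Complex.exp (-((z + t) * s)) * Complex.exp (-(z + t)) := by
      intro t ht
      rw [show (1:ℂ) - ν - 1 = -ν by ring, ← mul_assoc, ← gamma_cplx hν (hwre t ht),
        integral_mul_const]
    rw [setIntegral_congr_fun measurableSet_Ioi step1]
    rw [integral_integral_swap (fubini_int hz hν)]
    have step2 : ∀ s ∈ Ioi (0:ℝ),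
        (∫ t in Ioi (0:ℝ),
            (s:ℂ)^(ν-1) * Complex.exp (-((z + t) * s)) * Complex.exp (-(z + t)))
          = Complex.exp (-z) *
              (Complex.exp (-z * s) * (s:ℂ)^(ν-1) / (1 + (s:ℂ))) := by
      intro s hs
      have hs' : (0:ℝ) < s := hs
      have hrw : ∀ t : ℝ,
          (s:ℂ)^(ν-1) * Complex.exp (-((z + t) * s)) * Complex.exp (-(z + t))
            = ((s:ℂ)^(ν-1) * Complex.exp (-(z * s)) * Complex.exp (-z)) *
                Complex.exp (-(((1 + s : ℝ):ℂ) * t)) := by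
        intro t
        rw [mul_assoc, mul_assoc, mul_assoc, ← Complex.exp_add, ← Complex.exp_add,
          ← Complex.exp_add]
        congr 2
        push_cast
        ring
      simp_rw [hrw]
      rw [integral_const_mul, cexp_int (by linarith : (0:ℝ) < 1 + s)]
      push_cast
      rw [div_eq_mul_inv]
      ring_nf
    rw [setIntegral_congr_fun measurableSet_Ioi step2, integral_const_mul]
  rw [terminant, div_mul_eq_mul_div, key, ← div_mul_eq_mul_div]
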